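/- Let k ≥ 1, let q ∈ [0,1), let A, B be disjoint subsets of Z_k with |A| ≤ |B|, let f : A → B be an injection, and let σ be a linear order on A. Let ρ : Z_k → Z_k be the rotation ρ(x) = x + 1 (mod k), let ρσ be the linear order on ρ(A) with ρ(a) before ρ(a′) iff a is before a′ in σ, and let ρf : ρ(A) → ρ(B) be defined by (ρf)(ρ(a)) = ρ(f(a)). Then (1) wt_{ρσ}(ρ(A), ρ(B), ρf) = wt_σ(A,B,f), and (2) the projected word ω′ of (ρ(A), ρ(B), ρf) is the rotation of the projected word ω of (A,B,f): ω′_{ρ(b)} = ω_b for all b ∈ Z_k. -/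

import Mathlib

open scoped Classical

noncomputable section

/-- `[r]_q = 1 + q + ... + q^(r-1)`, with `[0]_q = 0`. -/
def qa (q : ℝ) (r : ℕ) : ℝ := ∑ m ∈ Finset.range r, q ^ m

/-- The factor contributed by an element `a` of the first row that is linked to `b`
when the set of available elements of the second row is `D`: if `b` is the `m`-th
element of `D` in increasing order of cyclic distance `(· - a) mod k`
(the ring `Z_k` being identified with `{1, …, k}`) and `r = |D|`, the factor is
`q^(m-1) / [r]_q`. -/
def stepW (q : ℝ) (k a : ℕ) (D : Finset ℕ) (b : ℕ) : ℝ :=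
  q ^ ((D.filter fun c => (c + k - a) % k < (b + k - a) % k).card) / qa q D.card

/-- Product of the factors obtained by processing the elements of the first list
in order, starting with available set `D`; each processed `a` is linked to `F a`,
which then becomes unavailable. -/
def chainW (q : ℝ) (k : ℕ) (F : ℕ → ℕ) : List ℕ → Finset ℕ → ℝ
  | [], _ => 1
  | a :: l, D => stepW q k a D (F a) * chainW q k F l (D.erase (F a))

/-- The weight `wt(A, B, F)` of a linked two-row multiline queue on `Z_k = {1,…,k}`:
trivial links (elements of `A ∩ B`, linked to themselves) contribute a factor `1`;
the elements of `A \ B` are processed in increasing order, the initially available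
elements of the second row being those of `B \ A`. -/
def mlqW (q : ℝ) (k : ℕ) (A B : Finset ℕ) (F : ℕ → ℕ) : ℝ :=
  chainW q k F ((A \ B).sort (· ≤ ·)) (B \ A)

/-- Extend an injection `f : A ↪ B` to a function `ℕ → ℕ` (identity off `A`). -/
def extendF (A B : Finset ℕ) (f : ↥A ↪ ↥B) : ℕ → ℕ :=
  fun x => if h : x ∈ A then (f ⟨x, h⟩).1 else x

/-- Sum of the weights `wt(A, B, f)` over all two-row multiline queues `(A, B)` on
`Z_k = {1,…,k}` and all linkings `f` of `(A, B)` (injections `f : A → B` with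
`f a = a` for all `a ∈ A ∩ B`) satisfying the condition `cond A B f`. -/
def mlqSum (q : ℝ) (k : ℕ)
    (cond : Finset ℕ → Finset ℕ → (ℕ → ℕ) → Prop) : ℝ :=
  ∑ A ∈ (Finset.Icc 1 k).powerset, ∑ B ∈ (Finset.Icc 1 k).powerset,
    ∑ f : (↥A ↪ ↥B),
      if (∀ a ∈ A ∩ B, extendF A B f a = a) ∧ cond A B (extendF A B f)
      then mlqW q k A B (extendF A B f) else 0

/-- `η_{s,t}(k)`: the total weight of linked two-row multiline queues of type
`(s, t, k-s-t)` on `Z_k` with disjoint rows whose projected word begins with `2`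
(i.e. `1 ∈ B \ f(A)`). -/
def eta (q : ℝ) (s t k : ℕ) : ℝ :=
  mlqSum q k fun A B F =>
    A ∩ B = ∅ ∧ A.card = s ∧ B.card = s + t ∧ 1 ∈ B ∧ 1 ∉ A.image F

/-- `W^A_{s,t}(n)`: total weight of linked MLQs of type `(s,t,n-s-t)` with
`1 ∉ A`, `2 ∉ A`, `1 ∉ B`, `2 ∈ B`, `2 ∉ f(A)` (projected word begins with `3,2`). -/
def WA (q : ℝ) (s t n : ℕ) : ℝ :=
  mlqSum q n fun A B F =>
    A.card = s ∧ B.card = s + t ∧ 1 ∉ A ∧ 2 ∉ A ∧ 1 ∉ B ∧ 2 ∈ B ∧ 2 ∉ A.image F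

/-- `τ^A_{s,t}(n)`: as `W^A_{s,t}(n)`, restricted to `A ∩ B = ∅`. -/
def tauA (q : ℝ) (s t n : ℕ) : ℝ :=
  mlqSum q n fun A B F =>
    A ∩ B = ∅ ∧
    A.card = s ∧ B.card = s + t ∧ 1 ∉ A ∧ 2 ∉ A ∧ 1 ∉ B ∧ 2 ∈ B ∧ 2 ∉ A.image F

/-- `W^B_{s,t}(n)`: total weight of linked MLQs of type `(s,t,n-s-t)` with
`1 ∈ A`, `2 ∉ A`, `1 ∉ B`, `2 ∈ B`, `2 ∉ f(A)` (projected word begins with `3,2`). -/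
def WB (q : ℝ) (s t n : ℕ) : ℝ :=
  mlqSum q n fun A B F =>
    A.card = s ∧ B.card = s + t ∧ 1 ∈ A ∧ 2 ∉ A ∧ 1 ∉ B ∧ 2 ∈ B ∧ 2 ∉ A.image F

/-- `τ^B_{s,t}(n)`: as `W^B_{s,t}(n)`, restricted to `A ∩ B = ∅`. -/
def tauB (q : ℝ) (s t n : ℕ) : ℝ :=
  mlqSum q n fun A B F =>
    A ∩ B = ∅ ∧
    A.card = s ∧ B.card = s + t ∧ 1 ∈ A ∧ 2 ∉ A ∧ 1 ∉ B ∧ 2 ∈ B ∧ 2 ∉ A.image F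

/-- `W^C_{s,t}(n)`: total weight of linked MLQs of type `(s,t,n-s-t)` with
`1 ∉ A`, `2 ∉ A`, `1 ∈ B`, `2 ∉ B`, `1 ∉ f(A)` (projected word begins with `2,3`). -/
def WC (q : ℝ) (s t n : ℕ) : ℝ :=
  mlqSum q n fun A B F =>
    A.card = s ∧ B.card = s + t ∧ 1 ∉ A ∧ 2 ∉ A ∧ 1 ∈ B ∧ 2 ∉ B ∧ 1 ∉ A.image F

/-- `W^D_{s,t}(n)`: total weight of linked MLQs of type `(s,t,n-s-t)` with
`1 ∉ A`, `2 ∈ A`, `1 ∈ B`, `2 ∉ B`, `1 ∉ f(A)` (projected word begins with `2,3`). -/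
def WD (q : ℝ) (s t n : ℕ) : ℝ :=
  mlqSum q n fun A B F =>
    A.card = s ∧ B.card = s + t ∧ 1 ∉ A ∧ 2 ∈ A ∧ 1 ∈ B ∧ 2 ∉ B ∧ 1 ∉ A.image F

/-- `τ^D_{s,t}(n)`: as `W^D_{s,t}(n)`, restricted to `A ∩ B = ∅`. -/
def tauD (q : ℝ) (s t n : ℕ) : ℝ :=
  mlqSum q n fun A B F =>
    A ∩ B = ∅ ∧
    A.card = s ∧ B.card = s + t ∧ 1 ∉ A ∧ 2 ∈ A ∧ 1 ∈ B ∧ 2 ∉ B ∧ 1 ∉ A.image F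

end

/-- The rotation `x ↦ x + 1` of the ring `Z_k` identified with `{1, …, k}`. -/
def rot (k x : ℕ) : ℕ := x % k + 1

/-- The projected word of a linked multiline queue `(A, B, F)`: site `b` gets the
label `1` if `b ∈ F(A)`, `2` if `b ∈ B \ F(A)`, and `3` if `b ∉ B`. -/
def projW (A B : Finset ℕ) (F : ℕ → ℕ) (b : ℕ) : ℕ :=
  if b ∈ A.image F then 1 else if b ∈ B then 2 else 3

lemma mod_sub_mod (k a c : ℕ) (hk : 0 < k) (ha : a ≤ k) :
    (c % k + k - a % k) % k = (c + k - a) % k := by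
  have hak : a % k < k := Nat.mod_lt _ hk
  have hc := Nat.div_add_mod c k
  have h1 : (c % k + k - a % k) + a % k ≡ (c + k - a) + a % k [MOD k] := by
    unfold Nat.ModEq
    rw [show c % k + k - a % k + a % k = c % k + k by omega]
    rw [Nat.add_mod_right, Nat.mod_mod_of_dvd _ dvd_rfl]
    rw [Nat.add_mod_mod, show c + k - a + a = c + k by omega, Nat.add_mod_right]
  exact h1.add_right_cancel' _

lemma rot_dist (k a c : ℕ) (hk : 1 ≤ k) (ha : a ≤ k) :
    (rot k c + k - rot k a) % k = (c + k - a) % k := by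
  have hak : a % k < k := Nat.mod_lt _ hk
  have e1 : rot k c + k - rot k a = c % k + k - a % k := by unfold rot; omega
  rw [e1, mod_sub_mod k a c hk ha]

lemma rot_injOn (k : ℕ) (hk : 1 ≤ k) {x y : ℕ} (hx : x ∈ Finset.Icc 1 k)
    (hy : y ∈ Finset.Icc 1 k) (h : rot k x = rot k y) : x = y := by
  simp only [Finset.mem_Icc] at hx hy
  unfold rot at h
  have hx' : x % k = x ∨ (x = k ∧ x % k = 0) := by
    rcases lt_or_eq_of_le hx.2 with h' | h'
    · exact Or.inl (Nat.mod_eq_of_lt h')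
    · exact Or.inr ⟨h', by simp [h']⟩
  have hy' : y % k = y ∨ (y = k ∧ y % k = 0) := by
    rcases lt_or_eq_of_le hy.2 with h' | h'
    · exact Or.inl (Nat.mod_eq_of_lt h')
    · exact Or.inr ⟨h', by simp [h']⟩
  omega

lemma image_erase_rot (k : ℕ) (hk : 1 ≤ k) (D : Finset ℕ) (hD : D ⊆ Finset.Icc 1 k)
    (m : ℕ) (hm : m ∈ Finset.Icc 1 k) :
    (D.image (rot k)).erase (rot k m) = (D.erase m).image (rot k) := by
  ext y
  simp only [Finset.mem_erase, Finset.mem_image]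
  constructor
  · rintro ⟨hne, c, hc, rfl⟩
    exact ⟨c, ⟨fun h => hne (by rw [h]), hc⟩, rfl⟩
  · rintro ⟨c, ⟨hcm, hc⟩, rfl⟩
    exact ⟨fun h => hcm (rot_injOn k hk (hD hc) hm h), c, hc, rfl⟩

lemma step_rot (q : ℝ) (k : ℕ) (hk : 1 ≤ k) (a : ℕ) (ha : a ≤ k)
    (D : Finset ℕ) (hD : D ⊆ Finset.Icc 1 k) (b : ℕ) :
    stepW q k (rot k a) (D.image (rot k)) (rot k b) = stepW q k a D b := by
  unfold stepW
  have hinj : Set.InjOn (rot k) D := fun x hx y hy h => rot_injOn k hk (hD hx) (hD hy) h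
  rw [Finset.card_image_of_injOn hinj]
  congr 2
  rw [Finset.filter_image]
  have hfe : (D.filter (fun c => (rot k c + k - rot k a) % k < (rot k b + k - rot k a) % k))
      = D.filter (fun c => (c + k - a) % k < (b + k - a) % k) := by
    apply Finset.filter_congr
    intro c _
    rw [rot_dist k a c hk ha, rot_dist k a b hk ha]
  rw [hfe, Finset.card_image_of_injOn (hinj.mono (by intro x hx; exact (Finset.mem_filter.1 hx).1))]

lemma chain_rot (q : ℝ) (k : ℕ) (hk : 1 ≤ k) (F G : ℕ → ℕ) :
    ∀ (l : List ℕ) (D : Finset ℕ), D ⊆ Finset.Icc 1 k →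
      (∀ a ∈ l, a ∈ Finset.Icc 1 k ∧ F a ∈ Finset.Icc 1 k ∧ G (rot k a) = rot k (F a)) →
      chainW q k G (l.map (rot k)) (D.image (rot k)) = chainW q k F l D
  | [], D, _, _ => rfl
  | a :: l, D, hD, h => by
    obtain ⟨ha, hFa, hGa⟩ := h a List.mem_cons_self
    simp only [List.map_cons, chainW]
    rw [hGa, step_rot q k hk a (Finset.mem_Icc.1 ha).2 D hD,
      image_erase_rot k hk D hD (F a) hFa,
      chain_rot q k hk F G l (D.erase (F a))
        (fun x hx => hD (Finset.mem_of_mem_erase hx))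
        (fun x hx => h x (List.mem_cons_of_mem _ hx))]

/-- Rotating a linked multiline queue (sets `A`, `B`, processing order `l`,
injection `F` with the rotated injection `G`) preserves the weight, and rotates
the projected word by the same distance. -/
theorem rotation_invariance (k : ℕ) (hk : 1 ≤ k) (q : ℝ) (hq0 : 0 ≤ q) (hq1 : q < 1)
    (A B : Finset ℕ) (hA : A ⊆ Finset.Icc 1 k) (hB : B ⊆ Finset.Icc 1 k)
    (hAB : Disjoint A B) (hcard : A.card ≤ B.card)
    (F : ℕ → ℕ) (hFinj : Set.InjOn F A) (hFmaps : ∀ a ∈ A, F a ∈ B)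
    (l : List ℕ) (hnd : l.Nodup) (hl : ∀ a, a ∈ l ↔ a ∈ A)
    (G : ℕ → ℕ) (hG : ∀ a ∈ A, G (rot k a) = rot k (F a)) :
    chainW q k G (l.map (rot k)) (B.image (rot k)) = chainW q k F l B ∧
    ∀ b ∈ Finset.Icc 1 k,
      projW (A.image (rot k)) (B.image (rot k)) G (rot k b) = projW A B F b := by
  constructor
  · exact chain_rot q k hk F G l B hB fun a hal =>
      ⟨hA ((hl a).1 hal), hB (hFmaps a ((hl a).1 hal)), hG a ((hl a).1 hal)⟩
  · intro b hb
    have him : (A.image (rot k)).image G = (A.image F).image (rot k) := by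
      rw [Finset.image_image, Finset.image_image]
      exact Finset.image_congr fun a ha => hG a ha
    have h1 : (rot k b ∈ (A.image (rot k)).image G) = (b ∈ A.image F) := by
      rw [him]
      apply propext
      constructor
      · rintro h
        obtain ⟨c, hc, hcb⟩ := Finset.mem_image.1 h
        obtain ⟨a, ha, rfl⟩ := Finset.mem_image.1 hc
        rwa [← rot_injOn k hk (hB (hFmaps a ha)) hb hcb]
      · exact fun h => Finset.mem_image_of_mem _ h
    have h2 : (rot k b ∈ B.image (rot k)) = (b ∈ B) := by
      apply propext
      constructor
      · rintro h
        obtain ⟨c, hc, hcb⟩ := Finset.mem_image.1 h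
        rwa [← rot_injOn k hk (hB hc) hb hcb]
      · exact fun h => Finset.mem_image_of_mem _ h
    unfold projW
    simp only [h1, h2]
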